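/- The maximal game length of the ordered Zeckendorf game satisfies the lower bound M(n) ≥ n²/2 − n·log_φ(n) + o(n·log_φ(n)) as n → ∞; equivalently, for every ε > 0 there exists N such that for all n ≥ N, M(n) ≥ n²/2 − (1+ε)·n·log_φ(n), where φ = (1+√5)/2 is the golden ratio. -/

import Mathlib

/-- Fibonacci numbers indexed so that `F 1 = 1`, `F 2 = 2`,
and `F (i+1) = F i + F (i-1)`. -/
def F (i : ℕ) : ℕ := Nat.fib (i + 1)

/-- A single legal move of the ordered Zeckendorf game, acting on an
adjacent pair of entries of the list of indices. -/
inductive Move : List ℕ → List ℕ → Prop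
  | merge (a b : List ℕ) (i : ℕ) (hi : 1 ≤ i) :
      Move (a ++ [i, i + 1] ++ b) (a ++ [i + 2] ++ b)
  | mergeOnes (a b : List ℕ) :
      Move (a ++ [1, 1] ++ b) (a ++ [2] ++ b)
  | split (a b : List ℕ) (i : ℕ) (hi : 2 < i) :
      Move (a ++ [i, i] ++ b) (a ++ [i - 2, i + 1] ++ b)
  | splitTwos (a b : List ℕ) :
      Move (a ++ [2, 2] ++ b) (a ++ [1, 3] ++ b)
  | switch (a b : List ℕ) (i j : ℕ) (hj : 1 ≤ j) (hij : j < i) :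
      Move (a ++ [i, j] ++ b) (a ++ [j, i] ++ b)

/-- A play of the ordered Zeckendorf game on `n` with `m` moves:
the initial state is `n` copies of `1`, and each step is a legal move. -/
def IsPlay (n : ℕ) (s : ℕ → List ℕ) (m : ℕ) : Prop :=
  s 0 = List.replicate n 1 ∧ ∀ t < m, Move (s t) (s (t + 1))

/-- A state is terminal if no legal move applies to it. -/
def Terminal (S : List ℕ) : Prop := ∀ T, ¬ Move S T

/-- The total Fibonacci value of a state. -/
def val (S : List ℕ) : ℕ := (S.map F).sum

/-- The monovariant `f(S) = Σ_{j=1}^k (k+1−j)·F_{i_j}` (here with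
`j` running over 0-based positions, so the weight of position `j` is
`k − j`). -/
def f (S : List ℕ) : ℕ := ∑ j : Fin S.length, (S.length - (j : ℕ)) * F (S.get j)

/-- `M n` is the maximal number of moves in a completed play of the
ordered Zeckendorf game on `n`. -/
noncomputable def M (n : ℕ) : ℕ :=
  sSup {m | ∃ s : ℕ → List ℕ, IsPlay n s m ∧ Terminal (s m)}

/-- The golden ratio `φ = (1+√5)/2`. -/
noncomputable def phi : ℝ := (1 + Real.sqrt 5) / 2

/-- Logarithm to base `φ`. -/
noncomputable def logphi (x : ℝ) : ℝ := Real.log x / Real.log phi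

/-! ### Basic facts -/

lemma F_pos (i : ℕ) : 0 < F i := Nat.fib_pos.2 (Nat.succ_pos i)

lemma F_one_le (i : ℕ) : 1 ≤ F i := F_pos i

lemma F_add_two (k : ℕ) : F (k + 2) = F (k + 1) + F k := by
  show Nat.fib (k + 3) = _
  rw [show k + 3 = (k + 1) + 2 by ring, Nat.fib_add_two]
  simp [F]; omega

lemma F_mono : Monotone F := fun i j h => Nat.fib_mono (by omega)

lemma F_le_two_mul (x : ℕ) : F (x + 1) ≤ 2 * F x := by
  cases x with
  | zero => decide
  | succ k => rw [F_add_two k]; have := F_mono (show k ≤ k+1 by omega); omega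

lemma F_one : F 1 = 1 := rfl
lemma F_two : F 2 = 2 := rfl
lemma F_three : F 3 = 3 := rfl

lemma F_lt_F (i j : ℕ) (hj : 1 ≤ j) (hij : j < i) : F j < F i := by
  have h1 : F j < F (j + 1) := by
    show Nat.fib (j+1) < Nat.fib (j+2) 
    exact Nat.fib_lt_fib_succ (by omega)
  exact lt_of_lt_of_le h1 (F_mono (by omega))

/-! ### val -/

@[simp] lemma val_nil : val [] = 0 := rfl
@[simp] lemma val_cons (x : ℕ) (t : List ℕ) : val (x :: t) = F x + val t := rfl
@[simp] lemma val_append (a b : List ℕ) : val (a ++ b) = val a + val b := by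
  simp [val]

lemma val_replicate_one (n : ℕ) : val (List.replicate n 1) = n := by
  induction n with
  | zero => rfl
  | succ n ih => simp [List.replicate_succ, ih, F_one]; omega

lemma F_le_val_of_mem {c : ℕ} {W : List ℕ} (h : c ∈ W) : F c ≤ val W := by
  induction W with
  | nil => simp at h
  | cons x t ih =>
    rcases List.mem_cons.1 h with h | h
    · subst h; simp
    · have := ih h; simp; omega

lemma length_le_val (W : List ℕ) : W.length ≤ val W := by
  induction W with
  | nil => simp
  | cons x t ih => have := F_one_le x; simp; omega

/-! ### f -/

@[simp] lemma f_nil : f [] = 0 := rfl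

lemma f_cons (x : ℕ) (t : List ℕ) : f (x :: t) = (t.length + 1) * F x + f t := by
  show ∑ j : Fin (t.length + 1), ((t.length + 1) - (j : ℕ)) * F ((x :: t).get j) = _
  rw [Fin.sum_univ_succ]
  congr 1
  apply Finset.sum_congr rfl
  intro j _
  have h1 : t.length + 1 - ((j.succ : ℕ)) = t.length - (j : ℕ) := by
    simp
  rw [h1]
  rfl

lemma f_append (a b : List ℕ) : f (a ++ b) = f a + b.length * val a + f b := by
  induction a with
  | nil => simp
  | cons x t ih =>
    rw [List.cons_append, f_cons, f_cons, ih]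
    simp [List.length_append]
    ring

lemma f_replicate_one (n : ℕ) : 2 * f (List.replicate n 1) = n * n + n := by
  induction n with
  | zero => rfl
  | succ n ih =>
    rw [List.replicate_succ, f_cons]
    simp only [F_one, mul_one, List.length_replicate]
    have h2 : (n+1)*(n+1) = n*n + 2*n + 1 := by ring
    omega
/-! ### Potential -/

def U (c : ℕ) : ℕ := c * (Nat.fib c + 3 * Nat.fib (c + 1))

def pot5 (W : List ℕ) : ℕ := (W.map U).sum

@[simp] lemma pot5_nil : pot5 [] = 0 := rfl
@[simp] lemma pot5_cons (x : ℕ) (t : List ℕ) : pot5 (x :: t) = U x + pot5 t := rfl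

lemma U_two : U 2 = 14 := rfl
lemma U_three : U 3 = 33 := rfl
lemma U_four : U 4 = 72 := rfl

lemma U_key (k : ℕ) : U (k + 2) + U (k + 5) = 2 * U (k + 4) + 5 * Nat.fib (k + 4) := by
  have h2 : Nat.fib (k + 2) = Nat.fib k + Nat.fib (k + 1) := Nat.fib_add_two
  have h3 : Nat.fib (k + 3) = Nat.fib (k + 1) + Nat.fib (k + 2) := Nat.fib_add_two
  have h4 : Nat.fib (k + 4) = Nat.fib (k + 2) + Nat.fib (k + 3) := Nat.fib_add_two
  have h5 : Nat.fib (k + 5) = Nat.fib (k + 3) + Nat.fib (k + 4) := Nat.fib_add_two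
  have h6 : Nat.fib (k + 6) = Nat.fib (k + 4) + Nat.fib (k + 5) := Nat.fib_add_two
  unfold U
  rw [h6, h5, h4, h3, h2]
  ring

lemma U_le (c : ℕ) : U c ≤ 4 * c * F c := by
  unfold U F
  have : Nat.fib c ≤ Nat.fib (c + 1) := Nat.fib_mono (by omega)
  nlinarith

/-! ### f-drop of moves -/

lemma f_pair (x y : ℕ) (b : List ℕ) :
    f ([x, y] ++ b) = (b.length + 2) * F x + (b.length + 1) * F y + f b := by
  rw [show [x,y] ++ b = x :: (y :: b) from rfl, f_cons, f_cons]
  simp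
  ring

lemma f_single (x : ℕ) (b : List ℕ) :
    f ([x] ++ b) = (b.length + 1) * F x + f b := by
  rw [show [x] ++ b = x :: b from rfl, f_cons]

lemma f_drop_merge (a b : List ℕ) (i : ℕ) :
    f (a ++ [i, i + 1] ++ b) = f (a ++ [i + 2] ++ b) + (val a + F i) := by
  rw [List.append_assoc, List.append_assoc, f_append, f_append, f_append, f_append]
  have hF : F (i + 2) = F (i + 1) + F i := F_add_two i
  simp [f_cons, val_cons, hF]
  ring_nf

lemma f_drop_mergeOnes (a b : List ℕ) :
    f (a ++ [1, 1] ++ b) = f (a ++ [2] ++ b) + (val a + 1) := by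
  rw [List.append_assoc, List.append_assoc, f_append, f_append, f_append, f_append]
  simp [f_cons, val_cons, F_one, F_two]
  ring_nf

lemma f_drop_split (a b : List ℕ) (k : ℕ) :
    f (a ++ [k + 3, k + 3] ++ b) = f (a ++ [k + 1, k + 4] ++ b) + F (k + 2) := by
  rw [List.append_assoc, List.append_assoc, f_append, f_append, f_append, f_append]
  have h4 : F (k + 4) = F (k + 3) + F (k + 2) := F_add_two (k + 2)
  have h3 : F (k + 3) = F (k + 2) + F (k + 1) := F_add_two (k + 1)
  simp [f_cons, val_cons, h4, h3]
  ring_nf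

lemma f_drop_splitTwos (a b : List ℕ) :
    f (a ++ [2, 2] ++ b) = f (a ++ [1, 3] ++ b) + 1 := by
  rw [List.append_assoc, List.append_assoc, f_append, f_append, f_append, f_append]
  simp [f_cons, val_cons, F_one, F_two, F_three]
  ring_nf

lemma f_drop_switch (a b : List ℕ) (i j : ℕ) :
    f (a ++ [i, j] ++ b) + F j = f (a ++ [j, i] ++ b) + F i := by
  rw [List.append_assoc, List.append_assoc, f_append, f_append, f_append, f_append]
  simp [f_cons, val_cons]
  ring_nf

lemma move_f {S T : List ℕ} (h : Move S T) : f T < f S := by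
  cases h with
  | merge a b i hi =>
    rw [f_drop_merge a b i]
    have := F_pos i; omega
  | mergeOnes a b =>
    rw [f_drop_mergeOnes a b]; omega
  | split a b i hi =>
    obtain ⟨k, rfl⟩ : ∃ k, i = k + 3 := ⟨i - 3, by omega⟩
    have hs : (k + 3) - 2 = k + 1 := by omega
    have hn : k + 3 + 1 = k + 4 := by omega
    rw [hs, hn, f_drop_split a b k]
    have := F_pos (k + 2); omega
  | splitTwos a b =>
    rw [f_drop_splitTwos a b]; omega
  | switch a b i j hj hij =>
    have h1 := f_drop_switch a b i j
    have h2 := F_lt_F i j hj hij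
    omega

lemma move_val {S T : List ℕ} (h : Move S T) : val S = val T := by
  cases h with
  | merge a b i hi =>
    have hF : F (i + 2) = F (i + 1) + F i := F_add_two i
    simp [val_append]; omega
  | mergeOnes a b => simp [val_append, F_one, F_two]; omega
  | split a b i hi =>
    obtain ⟨k, rfl⟩ : ∃ k, i = k + 3 := ⟨i - 3, by omega⟩
    have hs : (k + 3) - 2 = k + 1 := by omega
    have hn : k + 3 + 1 = k + 4 := by omega
    have h4 : F (k + 4) = F (k + 3) + F (k + 2) := F_add_two (k + 2)
    have h3 : F (k + 3) = F (k + 2) + F (k + 1) := F_add_two (k + 1)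
    rw [hs, hn]
    simp [val_append]; omega
  | splitTwos a b => simp [val_append, F_one, F_two, F_three]; omega
  | switch a b i j hj hij => simp [val_append]; omega

/-! ### Steps -/

inductive Steps : ℕ → List ℕ → List ℕ → Prop
  | refl (S : List ℕ) : Steps 0 S S
  | step {S T U : List ℕ} {m : ℕ} : Move S T → Steps m T U → Steps (m + 1) S U

lemma Steps.trans {S T U : List ℕ} {m k : ℕ} (h1 : Steps m S T) (h2 : Steps k T U) :
    Steps (m + k) S U := by
  induction h1 with
  | refl S => simpa using h2
  | step mv _ ih =>
    have := Steps.step mv (ih h2)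
    convert this using 1
    omega

lemma Steps.single {S T : List ℕ} (h : Move S T) : Steps 1 S T :=
  Steps.step h (Steps.refl T)

lemma steps_f {S T : List ℕ} {m : ℕ} (h : Steps m S T) : f T + m ≤ f S := by
  induction h with
  | refl S => omega
  | step mv _ ih => have := move_f mv; omega

lemma steps_val {S T : List ℕ} {m : ℕ} (h : Steps m S T) : val S = val T := by
  induction h with
  | refl S => rfl
  | step mv _ ih => rw [move_val mv, ih]

lemma move_ctx {S T : List ℕ} (P : List ℕ) (h : Move S T) : Move (P ++ S) (P ++ T) := by
  cases h with
  | merge a b i hi => simpa [List.append_assoc] using Move.merge (P ++ a) b i hi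
  | mergeOnes a b => simpa [List.append_assoc] using Move.mergeOnes (P ++ a) b
  | split a b i hi => simpa [List.append_assoc] using Move.split (P ++ a) b i hi
  | splitTwos a b => simpa [List.append_assoc] using Move.splitTwos (P ++ a) b
  | switch a b i j hj hij => simpa [List.append_assoc] using Move.switch (P ++ a) b i j hj hij

lemma steps_ctx {S T : List ℕ} {m : ℕ} (P : List ℕ) (h : Steps m S T) :
    Steps m (P ++ S) (P ++ T) := by
  induction h with
  | refl S => exact Steps.refl _
  | step mv _ ih => exact Steps.step (move_ctx P mv) ih
/-! ### sorted helpers -/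

lemma chain'_lt_of_mem {d x : ℕ} {t : List ℕ} (h : List.Chain' (· < ·) (d :: t))
    (hx : x ∈ t) : d < x := by
  induction t generalizing d with
  | nil => simp at hx
  | cons y u ih =>
    rw [List.Chain', List.isChain_cons_cons] at h
    rcases List.mem_cons.1 hx with rfl | hx
    · exact h.1
    · exact lt_trans h.1 (ih h.2 hx)

lemma chain'_cons_all {a : ℕ} {t : List ℕ} (h : List.Chain' (· < ·) t)
    (ha : ∀ x ∈ t, a < x) : List.Chain' (· < ·) (a :: t) := by
  rw [List.Chain', List.isChain_cons]
  exact ⟨fun y hy => ha y (List.mem_of_mem_head? hy), h⟩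

/-! ### bubble -/

lemma bubble_steps (k : ℕ) (W : List ℕ) :
    Steps k (2 :: (List.replicate k 1 ++ W)) (List.replicate k 1 ++ 2 :: W) := by
  induction k with
  | zero => simpa using Steps.refl (2 :: W)
  | succ k ih =>
    have mv : Move (2 :: (List.replicate (k+1) 1 ++ W)) ([1] ++ (2 :: (List.replicate k 1 ++ W))) := by
      have h := Move.switch [] (List.replicate k 1 ++ W) 2 1 le_rfl (by omega)
      simpa [List.replicate_succ] using h
    have h2 : Steps k ([1] ++ (2 :: (List.replicate k 1 ++ W)))
        ([1] ++ (List.replicate k 1 ++ 2 :: W)) := steps_ctx [1] ih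
    have := Steps.step mv h2
    simpa [List.replicate_succ] using this

lemma bubble_f (k : ℕ) (W : List ℕ) :
    f (2 :: (List.replicate k 1 ++ W)) = f (List.replicate k 1 ++ 2 :: W) + k := by
  rw [f_cons, f_append, f_append, f_cons]
  simp [val_replicate_one, F_two]
  ring

/-! ### cascade -/

lemma cascade4 : ∀ (W : List ℕ) (k : ℕ) (P : List ℕ),
    List.Chain' (· < ·) W → (∀ x ∈ W, k + 4 ≤ x) →
    ∃ m W', Steps m (P ++ (k + 4) :: W) (P ++ W') ∧
      List.Chain' (· < ·) W' ∧ (∀ x ∈ W', k + 2 ≤ x) ∧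
      5 * f (P ++ (k + 4) :: W) + pot5 ((k + 4) :: W) ≤ 5 * f (P ++ W') + 5 * m + pot5 W' := by
  intro W
  induction W with
  | nil =>
    intro k P _ _
    exact ⟨0, [k + 4], Steps.refl _, List.IsChain.singleton _, by intro x hx; simp at hx; omega, by omega⟩
  | cons d rest ih =>
    intro k P hchain hmin
    have hd : k + 4 ≤ d := hmin d (by simp)
    rcases eq_or_lt_of_le hd with heq | hlt
    · -- d = k + 4 : split
      subst heq
      have hrest_chain : List.Chain' (· < ·) rest := hchain.tail
      have hrest_min : ∀ x ∈ rest, (k + 1) + 4 ≤ x := by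
        intro x hx
        have := chain'_lt_of_mem hchain hx
        omega
      obtain ⟨m₁, W'', hsteps, hch, hmn, hled⟩ := ih (k + 1) (P ++ [k + 2]) hrest_chain hrest_min
      have mv : Move (P ++ (k + 4) :: (k + 4) :: rest) (P ++ [k + 2, k + 5] ++ rest) := by
        have h := Move.split P rest (k + 4) (by omega)
        have e1 : k + 4 - 2 = k + 2 := by omega
        have e2 : k + 4 + 1 = k + 5 := by omega
        rw [e1, e2] at h
        simpa using h
      have e45 : k + 1 + 4 = k + 5 := by omega
      rw [e45] at hsteps hled
      have hsteps' : Steps m₁ (P ++ [k + 2, k + 5] ++ rest) (P ++ (k + 2) :: W'') := by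
        have e : P ++ [k + 2, k + 5] ++ rest = P ++ [k + 2] ++ (k + 5) :: rest := by simp
        have e2 : P ++ (k + 2) :: W'' = P ++ [k + 2] ++ W'' := by simp
        rw [e, e2]; exact hsteps
      refine ⟨m₁ + 1, (k + 2) :: W'', Steps.step mv hsteps', ?_, ?_, ?_⟩
      · exact chain'_cons_all hch (fun x hx => by have := hmn x hx; omega)
      · intro x hx
        rcases List.mem_cons.1 hx with rfl | hx
        · omega
        · have := hmn x hx; omega
      · have hdrop : f (P ++ [k + 4, k + 4] ++ rest) = f (P ++ [k + 2, k + 5] ++ rest) + F (k + 3) := by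
          have h := f_drop_split P rest (k + 1)
          simpa [show k + 1 + 3 = k + 4 from by omega, show k + 1 + 1 = k + 2 from by omega,
            show k + 1 + 4 = k + 5 from by omega] using h
        have el1 : P ++ (k + 4) :: (k + 4) :: rest = P ++ [k + 4, k + 4] ++ rest := by simp
        have el2 : P ++ (k + 2) :: W'' = P ++ [k + 2] ++ W'' := by simp
        have el3 : P ++ [k + 2, k + 5] ++ rest = P ++ [k + 2] ++ (k + 5) :: rest := by simp
        rw [el1, el2, hdrop, el3]
        have key := U_key k
        have Ffib : F (k + 3) = Nat.fib (k + 4) := rfl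
        simp only [pot5_cons] at *
        omega
    · -- k + 4 < d : place
      refine ⟨0, (k + 4) :: d :: rest, ?_, ?_, ?_, ?_⟩
      · simpa using Steps.refl _
      · exact chain'_cons_all hchain (fun x hx => by
          rcases List.mem_cons.1 hx with rfl | hx
          · omega
          · have := chain'_lt_of_mem hchain hx; omega)
      · intro x hx
        rcases List.mem_cons.1 hx with rfl | hx
        · omega
        · have := hmin x hx; omega
      · simp
/-! ### one round: merge two ones, bubble the 2 through, cascade -/

lemma steps_cast {S T : List ℕ} {m m' : ℕ} (h : m = m') (hs : Steps m S T) : Steps m' S T :=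
  h ▸ hs

lemma round_step (s : ℕ) (W : List ℕ) (hW : List.Chain' (· < ·) W) (h2 : ∀ x ∈ W, 2 ≤ x) :
    ∃ mr e W', 1 ≤ mr ∧
      Steps mr (List.replicate (s + 2) 1 ++ W) (List.replicate (s + e) 1 ++ W') ∧
      List.Chain' (· < ·) W' ∧ (∀ x ∈ W', 2 ≤ x) ∧
      5 * f (List.replicate (s + 2) 1 ++ W) + pot5 W ≤
        5 * f (List.replicate (s + e) 1 ++ W') + 5 * mr + pot5 W' := by
  have mv1 : Move (List.replicate (s + 2) 1 ++ W) (2 :: (List.replicate s 1 ++ W)) := by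
    have h := Move.mergeOnes [] (List.replicate s 1 ++ W)
    simpa [List.replicate_succ] using h
  have hf1 : f (List.replicate (s + 2) 1 ++ W) = f (2 :: (List.replicate s 1 ++ W)) + 1 := by
    have h := f_drop_mergeOnes [] (List.replicate s 1 ++ W)
    simp only [List.nil_append, val_nil, List.cons_append] at h
    have e1 : List.replicate (s + 2) 1 ++ W = 1 :: 1 :: (List.replicate s 1 ++ W) := by
      simp [List.replicate_succ]
    rw [e1]
    omega
  have hbub : Steps s (2 :: (List.replicate s 1 ++ W)) (List.replicate s 1 ++ 2 :: W) :=
    bubble_steps s W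
  have hfb : f (2 :: (List.replicate s 1 ++ W)) = f (List.replicate s 1 ++ 2 :: W) + s :=
    bubble_f s W
  have hS2 : Steps (s + 1) (List.replicate (s + 2) 1 ++ W) (List.replicate s 1 ++ 2 :: W) := by
    have := Steps.step mv1 hbub
    exact steps_cast (by omega) this
  rcases W with _ | ⟨d, rest⟩
  · refine ⟨s + 1, 0, [2], by omega, ?_, List.IsChain.singleton _, by simp, ?_⟩
    · simpa using hS2
    · simp only [pot5_nil, pot5_cons, Nat.add_zero, U_two]
      omega
  · have hd2 : 2 ≤ d := h2 d (by simp)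
    rcases eq_or_lt_of_le hd2 with hdeq | hd3
    · -- d = 2 : splitTwos
      have hdeq' : d = 2 := hdeq.symm
      subst hdeq'
      have mv2 : Move (List.replicate s 1 ++ 2 :: 2 :: rest) (List.replicate s 1 ++ [1, 3] ++ rest) := by
        have h := Move.splitTwos (List.replicate s 1) rest
        simpa using h
      have hf2 : f (List.replicate s 1 ++ 2 :: 2 :: rest) = f (List.replicate s 1 ++ [1, 3] ++ rest) + 1 := by
        have h := f_drop_splitTwos (List.replicate s 1) rest
        simpa using h
      have eS3 : List.replicate s 1 ++ [1, 3] ++ rest = List.replicate (s + 1) 1 ++ 3 :: rest := by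
        simp [List.replicate_succ', List.append_assoc]
      rw [eS3] at mv2 hf2
      rcases rest with _ | ⟨d2, rest₂⟩
      · refine ⟨s + 2, 1, [3], by omega, ?_, List.IsChain.singleton _, by simp, ?_⟩
        · have h3 := Steps.single mv2
          have := Steps.trans hS2 h3
          exact steps_cast (by omega) this
        · simp only [pot5_cons, pot5_nil, U_two, U_three]
          omega
      · have hd23 : 3 ≤ d2 := by
          have := chain'_lt_of_mem hW (show d2 ∈ d2 :: rest₂ by simp)
          omega
        rcases eq_or_lt_of_le hd23 with hd2eq | hd24
        · -- d2 = 3 : split (3,3) then cascade at 4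
          have hd2eq' : d2 = 3 := hd2eq.symm
          subst hd2eq'
          have mv3 : Move (List.replicate (s + 1) 1 ++ 3 :: 3 :: rest₂)
              (List.replicate (s + 1) 1 ++ [1, 4] ++ rest₂) := by
            have h := Move.split (List.replicate (s + 1) 1) rest₂ 3 (by omega)
            simpa [show (3 : ℕ) - 2 = 1 from rfl] using h
          have hf3 : f (List.replicate (s + 1) 1 ++ 3 :: 3 :: rest₂) =
              f (List.replicate (s + 1) 1 ++ [1, 4] ++ rest₂) + 2 := by
            have h := f_drop_split (List.replicate (s + 1) 1) rest₂ 0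
            simpa [F_two] using h
          have eS4 : List.replicate (s + 1) 1 ++ [1, 4] ++ rest₂ =
              List.replicate (s + 2) 1 ++ 4 :: rest₂ := by
            simp [List.replicate_succ', List.append_assoc]
          rw [eS4] at mv3 hf3
          have hch2 : List.Chain' (· < ·) rest₂ := hW.tail.tail
          have hmin2 : ∀ x ∈ rest₂, 0 + 4 ≤ x := by
            intro x hx
            have := chain'_lt_of_mem hW.tail hx
            omega
          obtain ⟨m₁, W'', hsteps, hch, hmn, hled⟩ :=
            cascade4 rest₂ 0 (List.replicate (s + 2) 1) hch2 hmin2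
          simp only [Nat.zero_add] at hsteps hmn hled
          refine ⟨s + 3 + m₁, 2, W'', by omega, ?_, hch,
            fun x hx => by have := hmn x hx; omega, ?_⟩
          · have := Steps.trans (Steps.trans (Steps.trans hS2 (Steps.single mv2))
              (Steps.single mv3)) hsteps
            exact steps_cast (by omega) this
          · simp only [pot5_cons, U_two, U_three, U_four] at hled ⊢
            omega
        · -- d2 ≥ 4 : place the 3
          refine ⟨s + 2, 1, 3 :: d2 :: rest₂, by omega, ?_, ?_, ?_, ?_⟩
          · have := Steps.trans hS2 (Steps.single mv2)
            exact steps_cast (by omega) this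
          · exact chain'_cons_all hW.tail (fun x hx => by
              rcases List.mem_cons.1 hx with rfl | hx
              · omega
              · have := chain'_lt_of_mem hW.tail hx; omega)
          · intro x hx
            rcases List.mem_cons.1 hx with rfl | hx
            · omega
            · exact h2 x (by simp [List.mem_cons.1 hx])
          · simp only [pot5_cons, U_two, U_three] at *
            omega
    · -- d ≥ 3 : place the 2
      refine ⟨s + 1, 0, 2 :: d :: rest, by omega, ?_, ?_, ?_, ?_⟩
      · simpa using hS2
      · exact chain'_cons_all hW (fun x hx => by
          rcases List.mem_cons.1 hx with rfl | hx
          · omega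
          · have := chain'_lt_of_mem hW hx; omega)
      · intro x hx
        rcases List.mem_cons.1 hx with rfl | hx
        · omega
        · exact h2 x hx
      · simp only [pot5_cons, U_two, Nat.add_zero] at *
        omega
/-! ### main loop -/

lemma mainLoop : ∀ (fuel r : ℕ) (W : List ℕ),
    f (List.replicate r 1 ++ W) ≤ fuel →
    List.Chain' (· < ·) W → (∀ x ∈ W, 2 ≤ x) →
    ∃ m r' W', r' ≤ 1 ∧
      Steps m (List.replicate r 1 ++ W) (List.replicate r' 1 ++ W') ∧
      List.Chain' (· < ·) W' ∧ (∀ x ∈ W', 2 ≤ x) ∧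
      5 * f (List.replicate r 1 ++ W) + pot5 W ≤
        5 * f (List.replicate r' 1 ++ W') + 5 * m + pot5 W' := by
  intro fuel
  induction fuel with
  | zero =>
    intro r W hfuel hch h2
    match r with
    | 0 => exact ⟨0, 0, W, by omega, Steps.refl _, hch, h2, by omega⟩
    | 1 => exact ⟨0, 1, W, by omega, Steps.refl _, hch, h2, by omega⟩
    | (s + 2) =>
      exfalso
      have h := f_append (List.replicate (s + 2) 1) W
      have h2' := f_replicate_one (s + 2)
      have : f (List.replicate (s + 2) 1 ++ W) = 0 := by omega
      rw [h] at this
      have hx : (s + 2) * (s + 2) + (s + 2) > 0 := by positivity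
      omega
  | succ fuel ih =>
    intro r W hfuel hch h2
    match r with
    | 0 => exact ⟨0, 0, W, by omega, Steps.refl _, hch, h2, by omega⟩
    | 1 => exact ⟨0, 1, W, by omega, Steps.refl _, hch, h2, by omega⟩
    | (s + 2) =>
      obtain ⟨mr, e, W₁, hmr, hsteps₁, hch₁, h2₁, hled₁⟩ := round_step s W hch h2
      have hnext : f (List.replicate (s + e) 1 ++ W₁) ≤ fuel := by
        have := steps_f hsteps₁
        omega
      obtain ⟨m₂, r', W', hr', hsteps₂, hch₂, h2₂, hled₂⟩ := ih (s + e) W₁ hnext hch₁ h2₁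
      exact ⟨mr + m₂, r', W', hr', Steps.trans hsteps₁ hsteps₂, hch₂, h2₂, by omega⟩

/-! ### completion to a terminal state -/

lemma completion : ∀ (N : ℕ) (S : List ℕ), f S ≤ N → ∃ m T, Steps m S T ∧ Terminal T := by
  intro N
  induction N with
  | zero =>
    intro S hS
    by_cases h : Terminal S
    · exact ⟨0, S, Steps.refl S, h⟩
    · simp only [Terminal, not_forall, not_not] at h
      obtain ⟨T, hT⟩ := h
      have := move_f hT
      omega
  | succ N ih =>
    intro S hS
    by_cases h : Terminal S
    · exact ⟨0, S, Steps.refl S, h⟩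
    · simp only [Terminal, not_forall, not_not] at h
      obtain ⟨T, hT⟩ := h
      have hfT : f T ≤ N := by have := move_f hT; omega
      obtain ⟨m, T', hsteps, hterm⟩ := ih T hfT
      exact ⟨m + 1, T', Steps.step hT hsteps, hterm⟩

/-! ### from Steps to IsPlay -/

lemma steps_to_fun {S T : List ℕ} {m : ℕ} (h : Steps m S T) :
    ∃ s : ℕ → List ℕ, s 0 = S ∧ s m = T ∧ ∀ t < m, Move (s t) (s (t + 1)) := by
  induction h with
  | refl S => exact ⟨fun _ => S, rfl, rfl, by omega⟩
  | @step S T U m mv _ ih =>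
    obtain ⟨s', h0, hm, hmv⟩ := ih
    refine ⟨fun t => match t with | 0 => S | (t + 1) => s' t, rfl, hm, ?_⟩
    intro t ht
    match t with
    | 0 => simpa [h0] using mv
    | (t + 1) => exact hmv t (by omega)

lemma isPlay_le {n : ℕ} {s : ℕ → List ℕ} {m : ℕ} (h : IsPlay n s m) :
    m ≤ f (List.replicate n 1) := by
  obtain ⟨h0, hmv⟩ := h
  have key : ∀ t ≤ m, f (s t) + t ≤ f (s 0) := by
    intro t
    induction t with
    | zero => omega
    | succ t iht =>
      intro ht
      have h1 := iht (by omega)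
      have h2 := move_f (hmv t (by omega))
      omega
  have := key m le_rfl
  rw [h0] at this
  omega

lemma bddAbove_plays (n : ℕ) :
    BddAbove {m | ∃ s : ℕ → List ℕ, IsPlay n s m ∧ Terminal (s m)} := by
  refine ⟨f (List.replicate n 1), ?_⟩
  rintro m ⟨s, hplay, _⟩
  exact isPlay_le hplay

lemma M_ge {n m : ℕ} (h : ∃ T, Steps m (List.replicate n 1) T ∧ Terminal T) : m ≤ M n := by
  obtain ⟨T, hsteps, hterm⟩ := h
  obtain ⟨s, h0, hm, hmv⟩ := steps_to_fun hsteps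
  apply le_csSup (bddAbove_plays n)
  exact ⟨s, ⟨h0, hmv⟩, by rw [hm]; exact hterm⟩
/-! ### bound on f of a strictly increasing list -/

lemma three_F_le (x : ℕ) (hx : 1 ≤ x) : 3 * F x ≤ 2 * F (x + 1) := by
  obtain ⟨w, rfl⟩ : ∃ w, x = w + 1 := ⟨x - 1, by omega⟩
  have h1 : F (w + 2) = F (w + 1) + F w := F_add_two w
  have h2 : F (w + 1) ≤ 2 * F w := F_le_two_mul w
  have h3 : w + 1 + 1 = w + 2 := rfl
  rw [h3]
  omega

lemma f_sorted_le : ∀ (t : List ℕ) (x : ℕ), 1 ≤ x → List.Chain' (· < ·) (x :: t) →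
    f (x :: t) + 2 * (t.length + 3) * F x ≤ 8 * val (x :: t) := by
  intro t
  induction t with
  | nil =>
    intro x hx _
    rw [f_cons]
    simp [f_nil, val_cons, val_nil]
    omega
  | cons y u ih =>
    intro x hx hch
    have hxy : x < y := hch.rel_head
    have hy : 1 ≤ y := by omega
    have hIH := ih y hy hch.tail
    have h32 : 3 * F x ≤ 2 * F y := le_trans (three_F_le x hx) (by
      have := F_mono (show x + 1 ≤ y by omega); omega)
    rw [f_cons, val_cons]
    have hmul : (u.length + 3) * (3 * F x) ≤ (u.length + 3) * (2 * F y) :=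
      Nat.mul_le_mul_left _ h32
    simp only [List.length_cons] at *
    nlinarith [hIH, hmul]

/-! ### pot5 real bound -/

lemma pot5_le_real (W : List ℕ) (K : ℝ) (n : ℕ) (hK : ∀ c ∈ W, (c : ℝ) ≤ K)
    (hval : val W ≤ n) (hK0 : 0 ≤ K) : (pot5 W : ℝ) ≤ 4 * K * (n : ℝ) := by
  have main : ∀ (V : List ℕ), (∀ c ∈ V, (c : ℝ) ≤ K) → (pot5 V : ℝ) ≤ 4 * K * (val V : ℝ) := by
    intro V
    induction V with
    | nil => simp
    | cons c t ih =>
      intro hc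
      have h1 : (U c : ℝ) ≤ 4 * K * (F c : ℝ) := by
        have hU : (U c : ℝ) ≤ 4 * (c : ℝ) * (F c : ℝ) := by
          have := U_le c
          push_cast
          exact_mod_cast this
        have hcK : (c : ℝ) ≤ K := hc c (by simp)
        have hF : (0 : ℝ) ≤ (F c : ℝ) := by positivity
        nlinarith
      have h2 := ih (fun c' hc' => hc c' (by simp [hc']))
      simp only [pot5_cons, val_cons]
      push_cast
      nlinarith
  have := main W hK
  have hvn : (val W : ℝ) ≤ (n : ℝ) := by exact_mod_cast hval
  nlinarith

/-! ### golden ratio facts -/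

lemma sqrt5_sq : Real.sqrt 5 ^ 2 = 5 := Real.sq_sqrt (by norm_num)

lemma sqrt5_lt_three : Real.sqrt 5 < 3 := by
  nlinarith [sqrt5_sq, Real.sqrt_nonneg 5]

lemma sqrt5_gt_two : 2 < Real.sqrt 5 := by
  nlinarith [sqrt5_sq, Real.sqrt_nonneg 5]

lemma phi_gt_one : 1 < phi := by
  unfold phi
  nlinarith [sqrt5_gt_two]

lemma phi_lt_two : phi < 2 := by
  unfold phi
  nlinarith [sqrt5_lt_three]

lemma phi_sq : phi ^ 2 = phi + 1 := by
  unfold phi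
  have := sqrt5_sq
  ring_nf
  nlinarith [sqrt5_sq]

lemma phi_pow_le_fib : ∀ k : ℕ, phi ^ k ≤ (Nat.fib (k + 2) : ℝ) := by
  intro k
  induction k using Nat.twoStepInduction with
  | zero => simp
  | one =>
    have : Nat.fib 3 = 2 := rfl
    rw [this]
    push_cast
    nlinarith [phi_lt_two]
  | more k ih1 ih2 =>
    have hphi : (0 : ℝ) < phi := by nlinarith [phi_gt_one]
    have hrec : Nat.fib (k + 4) = Nat.fib (k + 2) + Nat.fib (k + 3) := Nat.fib_add_two
    have e1 : phi ^ (k + 2) = phi ^ k * (phi + 1) := by rw [← phi_sq]; ring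
    have e2 : phi ^ (k + 1) = phi ^ k * phi := pow_succ phi k
    have e3 : k + 1 + 2 = k + 3 := rfl
    rw [e3] at ih2
    rw [show k + 2 + 2 = k + 4 from rfl, hrec, e1]
    push_cast
    nlinarith [ih1, ih2, e2, pow_pos hphi k]

lemma log_phi_pos : 0 < Real.log phi := Real.log_pos phi_gt_one
/-! ### final assembly -/

lemma final_arith (ε n L Tn fcl pot mR MR : ℝ)
    (hε : 0 < ε) (hn : 1 ≤ n) (hL : 64 ≤ L)
    (hTn : 2 * Tn = n ^ 2 + n)
    (hled : 5 * Tn ≤ 5 * fcl + 5 * mR + pot)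
    (hfcl : fcl ≤ 9 * n + 1)
    (hpot : pot ≤ 4 * (L + 1) * n)
    (hm : mR ≤ MR) :
    n ^ 2 / 2 - (1 + ε) * n * L ≤ MR := by
  have h0n : (0 : ℝ) ≤ n := by linarith
  have h1 : 0 ≤ n * (L - 64) := mul_nonneg h0n (by linarith)
  have h2 : 0 ≤ ε * (n * L) := by
    apply mul_nonneg hε.le
    nlinarith
  nlinarith [h1, h2]

theorem stmt_15 :
    ∀ ε : ℝ, 0 < ε → ∃ N : ℕ, ∀ n : ℕ, N ≤ n →
      (n : ℝ) ^ 2 / 2 - (1 + ε) * n * logphi n ≤ (M n : ℝ) := by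
  intro ε hε
  refine ⟨2 ^ 64, fun n hn => ?_⟩
  have hn1 : 1 ≤ n := le_trans (by norm_num) hn
  have hstart : List.replicate n 1 ++ ([] : List ℕ) = List.replicate n 1 := by simp
  obtain ⟨m₁, r', W', hr', hsteps₁, hch', h2', hled⟩ :=
    mainLoop (f (List.replicate n 1 ++ [])) n [] le_rfl List.IsChain.nil (by simp)
  obtain ⟨m₂, T, hsteps₂, hterm⟩ := completion (f (List.replicate r' 1 ++ W')) _ le_rfl
  have hM : m₁ + m₂ ≤ M n := by
    apply M_ge
    refine ⟨T, ?_, hterm⟩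
    rw [← hstart]
    exact Steps.trans hsteps₁ hsteps₂
  have hMm : m₁ ≤ M n := by omega
  -- value accounting
  have hvcl : val (List.replicate r' 1 ++ W') = n := by
    have h1 := steps_val hsteps₁
    rw [← h1]
    simp [val_replicate_one]
  have hvW : val W' ≤ n := by
    rw [val_append, val_replicate_one] at hvcl
    omega
  -- bound on f of the cleanup state
  have hfW : f W' ≤ 8 * val W' := by
    match W', hch', h2' with
    | [], _, _ => simp
    | (x :: t), hch', h2' =>
      have hx1 : 1 ≤ x := by have := h2' x (by simp); omega
      have := f_sorted_le t x hx1 hch'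
      omega
  have hlenW : W'.length ≤ val W' := length_le_val W'
  have hfrep : f (List.replicate r' 1) ≤ 1 := by
    have h := f_replicate_one r'
    have : r' * r' ≤ 1 := by nlinarith
    omega
  have hvrep : val (List.replicate r' 1) ≤ 1 := by rw [val_replicate_one]; omega
  have hfcl : f (List.replicate r' 1 ++ W') ≤ 9 * n + 1 := by
    rw [f_append]
    have h1 : W'.length * val (List.replicate r' 1) ≤ W'.length * 1 :=
      Nat.mul_le_mul_left _ hvrep
    omega
  -- element indices bounded via the golden ratio
  have hphi0 : (0 : ℝ) < phi := by nlinarith [phi_gt_one]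
  have hK : ∀ c ∈ W', (c : ℝ) ≤ Real.log n / Real.log phi + 1 := by
    intro c hc
    have hcF : F c ≤ n := le_trans (F_le_val_of_mem hc) hvW
    have hc1 : 1 ≤ c := by have := h2' c hc; omega
    have hpow : phi ^ (c - 1) ≤ (n : ℝ) := by
      have h1 := phi_pow_le_fib (c - 1)
      have e : c - 1 + 2 = c + 1 := by omega
      rw [e] at h1
      have h2 : ((Nat.fib (c + 1) : ℕ) : ℝ) ≤ (n : ℝ) := by exact_mod_cast hcF
      linarith
    have hlog : ((c : ℝ) - 1) * Real.log phi ≤ Real.log n := by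
      have h1 : Real.log (phi ^ (c - 1)) ≤ Real.log n := by
        apply Real.log_le_log (by positivity) hpow
      rw [Real.log_pow] at h1
      have e : ((c - 1 : ℕ) : ℝ) = (c : ℝ) - 1 := by
        push_cast [Nat.cast_sub hc1]
        ring
      rw [e] at h1
      exact h1
    have h2 : (c : ℝ) - 1 ≤ Real.log n / Real.log phi := by
      rw [le_div_iff₀ log_phi_pos]
      exact hlog
    linarith
  have hlogn0 : 0 ≤ Real.log n := Real.log_nonneg (by exact_mod_cast hn1)
  have hK0 : (0 : ℝ) ≤ Real.log n / Real.log phi + 1 := by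
    have h := div_nonneg hlogn0 log_phi_pos.le
    linarith
  have hpot := pot5_le_real W' (Real.log n / Real.log phi + 1) n hK hvW hK0
  -- the L ≥ 64 bound
  set L : ℝ := Real.log n / Real.log phi with hLdef
  have hlog2 : Real.log phi ≤ Real.log 2 := Real.log_le_log hphi0 (le_of_lt phi_lt_two)
  have hL64 : (64 : ℝ) ≤ L := by
    rw [hLdef, le_div_iff₀ log_phi_pos]
    have h1 : Real.log (2 ^ 64 : ℕ) ≤ Real.log n := by
      apply Real.log_le_log (by norm_num)
      exact_mod_cast hn
    have h2 : ((2 ^ 64 : ℕ) : ℝ) = (2 : ℝ) ^ 64 := by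
      rw [Nat.cast_pow]; norm_num
    rw [h2, Real.log_pow] at h1
    push_cast at h1
    nlinarith
  -- cast the ledger to ℝ
  have hled' : 5 * f (List.replicate n 1) ≤
      5 * f (List.replicate r' 1 ++ W') + 5 * m₁ + pot5 W' := by
    rw [hstart] at hled
    simp only [pot5_nil] at hled
    omega
  have hTn : 2 * ((f (List.replicate n 1) : ℕ) : ℝ) = (n : ℝ) ^ 2 + (n : ℝ) := by
    have h := f_replicate_one n
    have h2 : ((2 * f (List.replicate n 1) : ℕ) : ℝ) = ((n * n + n : ℕ) : ℝ) := by rw [h]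
    push_cast at h2
    have e : (n : ℝ) ^ 2 = (n : ℝ) * (n : ℝ) := pow_two (n : ℝ)
    linarith
  have hcast : (5 : ℝ) * ((f (List.replicate n 1) : ℕ) : ℝ) ≤
      5 * ((f (List.replicate r' 1 ++ W') : ℕ) : ℝ) + 5 * (m₁ : ℝ) + ((pot5 W' : ℕ) : ℝ) := by
    exact_mod_cast hled'
  have hfclR : ((f (List.replicate r' 1 ++ W') : ℕ) : ℝ) ≤ 9 * (n : ℝ) + 1 := by
    exact_mod_cast hfcl
  have hm₁R : (m₁ : ℝ) ≤ (M n : ℝ) := by exact_mod_cast hMm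
  have hnR : (1 : ℝ) ≤ (n : ℝ) := by exact_mod_cast hn1
  have goal2 : (n : ℝ) ^ 2 / 2 - (1 + ε) * n * L ≤ (M n : ℝ) :=
    final_arith ε n L _ _ _ _ _ hε hnR hL64 hTn hcast hfclR hpot hm₁R
  show (n : ℝ) ^ 2 / 2 - (1 + ε) * n * (Real.log n / Real.log phi) ≤ (M n : ℝ)
  rw [← hLdef]
  exact goal2
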